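/- For Poisson point processes on R, if 0 < r < s, then there is no translation-equivariant factor map φ from the intensity-r Poisson process to the intensity-s Poisson process admitting a deterministic constant coding window M: that is, there is no measurable translation-equivariant φ with P_r ∘ φ^{-1} = P_s such that for all μ, μ' agreeing on B(0, M), φ(μ) and φ(μ') agree on B(0,1). -/

import Mathlib

open MeasureTheory ProbabilityTheory

open scoped ENNReal

/-- The Poisson probability of the value `n` for a Poisson random variable of mean `m`. -/
noncomputable def poissonProb (m : ℝ) (n : ℕ) : ℝ≥0∞ :=
  ENNReal.ofReal (Real.exp (-m) * m ^ n / (Nat.factorial n))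

/-- `X` is a Poisson point process of intensity `r` on the Borel set `B ⊆ α` under the
probability measure `μ`: `X` is a random (point) measure supported on `B` such that the
number of points in any finite-volume measurable `C ⊆ B` is Poisson with mean
`r·Leb(C)`, and the counts in any finite family of pairwise disjoint measurable subsets
of `B` are independent. -/
def IsPoissonPP {Ω α : Type*} [MeasurableSpace Ω] [MeasureSpace α]
    (μ : MeasureTheory.Measure Ω) (r : ℝ) (B : Set α) (X : Ω → MeasureTheory.Measure α) :
    Prop :=
  Measurable X ∧
  (∀ᵐ ω ∂μ, X ω Bᶜ = 0) ∧
  (∀ C : Set α, MeasurableSet C → C ⊆ B → MeasureTheory.volume C ≠ ∞ → ∀ n : ℕ,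
    μ {ω | X ω C = (n : ℝ≥0∞)} = poissonProb (r * (MeasureTheory.volume C).toReal) n) ∧
  (∀ m : ℕ, ∀ C : Fin m → Set α, (∀ j, MeasurableSet (C j)) → (∀ j, C j ⊆ B) →
    (Pairwise fun j k => Disjoint (C j) (C k)) →
    ProbabilityTheory.iIndepFun (m := fun _ : Fin m => (inferInstance : MeasurableSpace ℝ≥0∞))
      (fun j ω => X ω (C j)) μ)

lemma tsum_poissonProb {m : ℝ} (hm : 0 ≤ m) : ∑' n, poissonProb m n = 1 := by
  have h1 : ∀ n, poissonProb m n = ENNReal.ofReal (poissonPMFReal ⟨m, hm⟩ n) := by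
    intro n; rfl
  simp_rw [h1]
  rw [← ENNReal.ofReal_tsum_of_nonneg (fun n => poissonPMFReal_nonneg)
    (poissonPMFRealSum ⟨m, hm⟩).summable]
  exact (congrArg ENNReal.ofReal (poissonPMFRealSum ⟨m, hm⟩).tsum_eq).trans ENNReal.ofReal_one

set_option maxHeartbeats 2000000 in
theorem stmt18 {Ω : Type*} [MeasureSpace Ω] [IsProbabilityMeasure (ℙ : Measure Ω)]
    (r s : ℝ) (hr : 0 < r) (hrs : r < s)
    (X : Ω → Measure ℝ) (hX : IsPoissonPP (ℙ : Measure Ω) r Set.univ X) :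
    ¬ ∃ (M : ℝ) (φ : Measure ℝ → Measure ℝ), Measurable φ ∧
        IsPoissonPP (ℙ : Measure Ω) s Set.univ (fun ω => φ (X ω)) ∧
        (∀ᵐ ω ∂(ℙ : Measure Ω), ∀ z : ℝ,
          φ (Measure.map (fun x => x + z) (X ω)) =
            Measure.map (fun x => x + z) (φ (X ω))) ∧
        (∀ μ μ' : Measure ℝ,
          μ.restrict (Metric.ball (0 : ℝ) M) = μ'.restrict (Metric.ball (0 : ℝ) M) →
          (φ μ).restrict (Metric.ball (0 : ℝ) 1) = (φ μ').restrict (Metric.ball (0 : ℝ) 1)) := by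
  rintro ⟨M, φ, hφm, hY, hEq, hLoc⟩
  obtain ⟨hXm, -, hXpois, -⟩ := hX
  obtain ⟨hYm, -, hYpois, -⟩ := hY
  have hs : (0:ℝ) < s := hr.trans hrs
  set M' : ℝ := max M 1 with hM'def
  have hM'1 : (1:ℝ) ≤ M' := le_max_right _ _
  have hM'0 : (0:ℝ) < M' := lt_of_lt_of_le one_pos hM'1
  -- upgraded locality with positive window M'
  have hLoc' : ∀ μ μ' : Measure ℝ,
      μ.restrict (Metric.ball (0 : ℝ) M') = μ'.restrict (Metric.ball (0 : ℝ) M') →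
      (φ μ).restrict (Metric.ball (0 : ℝ) 1) = (φ μ').restrict (Metric.ball (0 : ℝ) 1) := by
    intro μ μ' h
    apply hLoc
    have hsub : Metric.ball (0:ℝ) M ⊆ Metric.ball (0:ℝ) M' :=
      Metric.ball_subset_ball (le_max_left _ _)
    have e1 : μ.restrict (Metric.ball (0:ℝ) M)
        = (μ.restrict (Metric.ball (0:ℝ) M')).restrict (Metric.ball (0:ℝ) M) := by
      rw [Measure.restrict_restrict measurableSet_ball, Set.inter_eq_self_of_subset_left hsub]
    have e2 : μ'.restrict (Metric.ball (0:ℝ) M)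
        = (μ'.restrict (Metric.ball (0:ℝ) M')).restrict (Metric.ball (0:ℝ) M) := by
      rw [Measure.restrict_restrict measurableSet_ball, Set.inter_eq_self_of_subset_left hsub]
    rw [e1, e2, h]
  -- L1 : on the event that X is empty on the window, φ(X ω) agrees with φ(0) on B(0,1)
  have L1 : ∀ ω : Ω, X ω (Metric.ball 0 M') = 0 → ∀ F : Set ℝ, MeasurableSet F →
      F ⊆ Metric.ball (0:ℝ) 1 → φ (X ω) F = φ 0 F := by
    intro ω h0 F hF hFs
    have h := hLoc' (X ω) 0 (by
      rw [Measure.restrict_zero, Measure.restrict_eq_zero]; exact h0)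
    have h2 := congrArg (fun ν : Measure ℝ => ν F) h
    simpa [Measure.restrict_apply hF, Set.inter_eq_self_of_subset_left hFs] using h2
  -- L2 : shifted version, using equivariance
  have L2 : ∀ (ℓ : ℝ), 0 ≤ ℓ → ∀ ω : Ω,
      (∀ z : ℝ, φ (Measure.map (fun x => x + z) (X ω))
        = Measure.map (fun x => x + z) (φ (X ω))) →
      X ω (Metric.ball 0 (M' + ℓ)) = 0 → ∀ z : ℝ, |z| ≤ ℓ → ∀ F : Set ℝ, MeasurableSet F →
      F ⊆ Metric.ball (0:ℝ) 1 → φ (X ω) ((fun x => x + z) ⁻¹' F) = φ 0 F := by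
    intro ℓ hℓ ω hweq h0 z hz F hF hFs
    have hmz : Measurable (fun x : ℝ => x + z) := measurable_add_const z
    have hpre : (fun x : ℝ => x + z) ⁻¹' Metric.ball (0:ℝ) M' ⊆ Metric.ball (0:ℝ) (M' + ℓ) := by
      intro x hx
      simp only [Set.mem_preimage, Metric.mem_ball, Real.dist_eq, sub_zero] at hx ⊢
      have habs : |x| ≤ |x + z| + |z| := by
        have := abs_add_le (x + z) (-z)
        simpa using this
      linarith
    have hν0 : (Measure.map (fun x => x + z) (X ω)) (Metric.ball (0:ℝ) M') = 0 := by
      rw [Measure.map_apply hmz measurableSet_ball]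
      have := measure_mono (μ := X ω) hpre
      rw [h0] at this
      exact le_antisymm this zero_le
    have h := hLoc' (Measure.map (fun x => x + z) (X ω)) 0 (by
      rw [Measure.restrict_zero, Measure.restrict_eq_zero]; exact hν0)
    rw [hweq z] at h
    have h2 := congrArg (fun ν : Measure ℝ => ν F) h
    simp only [Measure.restrict_apply hF, Set.inter_eq_self_of_subset_left hFs] at h2
    rwa [Measure.map_apply hmz hF] at h2
  -- emptiness probabilities
  have hPX : ∀ m : ℝ, 0 ≤ m →
      ℙ {ω | X ω (Metric.ball (0:ℝ) m) = 0} = ENNReal.ofReal (Real.exp (-(r * (2*m)))) := by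
    intro m hm
    have h := hXpois (Metric.ball 0 m) measurableSet_ball (Set.subset_univ _) (by
      rw [Real.volume_ball]; exact ENNReal.ofReal_ne_top) 0
    rw [Real.volume_ball, ENNReal.toReal_ofReal (by linarith)] at h
    simpa [poissonProb] using h
  have hPY : ∀ m : ℝ, 0 ≤ m →
      ℙ {ω | φ (X ω) (Metric.ball (0:ℝ) m) = 0}
        = ENNReal.ofReal (Real.exp (-(s * (2*m)))) := by
    intro m hm
    have h := hYpois (Metric.ball 0 m) measurableSet_ball (Set.subset_univ _) (by
      rw [Real.volume_ball]; exact ENNReal.ofReal_ne_top) 0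
    rw [Real.volume_ball, ENNReal.toReal_ofReal (by linarith)] at h
    simpa [poissonProb] using h
  -- L3 : deterministic values of Y-counts on positive probability events are integers
  have L3 : ∀ C : Set ℝ, MeasurableSet C → volume C ≠ ∞ → ∀ c : ℝ≥0∞, ∀ A : Set Ω,
      ℙ A ≠ 0 → (∀ ω ∈ A, φ (X ω) C = c) → ∃ n : ℕ, c = n := by
    intro C hC hCvol c A hA hAc
    by_contra hc
    push_neg at hc
    have hYmC : Measurable fun ω => φ (X ω) C := (Measure.measurable_coe hC).comp hYm
    have hSm : ∀ n : ℕ, MeasurableSet {ω | φ (X ω) C = (n:ℝ≥0∞)} := fun n =>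
      hYmC (measurableSet_singleton _)
    have hdisj : Pairwise (Function.onFun Disjoint
        fun n : ℕ => {ω | φ (X ω) C = (n:ℝ≥0∞)}) := by
      intro i j hij
      simp only [Function.onFun, Set.disjoint_left, Set.mem_setOf_eq]
      intro ω h1 h2
      exact hij (Nat.cast_injective (h1.symm.trans h2))
    have hU : ℙ (⋃ n : ℕ, {ω | φ (X ω) C = (n:ℝ≥0∞)}) = 1 := by
      rw [measure_iUnion hdisj hSm]
      have heach : ∀ n : ℕ, ℙ {ω | φ (X ω) C = (n:ℝ≥0∞)}
          = poissonProb (s * (volume C).toReal) n :=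
        fun n => hYpois C hC (Set.subset_univ _) hCvol n
      simp_rw [heach]
      exact tsum_poissonProb (mul_nonneg hs.le ENNReal.toReal_nonneg)
    have hcompl : ℙ (⋃ n : ℕ, {ω | φ (X ω) C = (n:ℝ≥0∞)})ᶜ = 0 := by
      rw [measure_compl (MeasurableSet.iUnion hSm) (measure_ne_top _ _), hU, measure_univ,
        tsub_self]
    have hsub : A ⊆ (⋃ n : ℕ, {ω | φ (X ω) C = (n:ℝ≥0∞)})ᶜ := by
      intro ω hω
      simp only [Set.mem_compl_iff, Set.mem_iUnion, Set.mem_setOf_eq]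
      push_neg
      intro n h
      exact hc n ((hAc ω hω).symm.trans h)
    exact hA (le_antisymm (hcompl ▸ measure_mono hsub) zero_le)
  -- the deterministic value on B(0,1)
  set A₀ : Set Ω := {ω | X ω (Metric.ball (0:ℝ) M') = 0} with hA₀def
  have hA₀ne : ℙ A₀ ≠ 0 := by
    rw [hPX M' hM'0.le]
    simp [Real.exp_pos]
  have hA₀val : ∀ ω ∈ A₀, φ (X ω) (Metric.ball (0:ℝ) 1) = φ 0 (Metric.ball (0:ℝ) 1) :=
    fun ω hω => L1 ω hω _ measurableSet_ball subset_rfl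
  obtain ⟨n₀, hn₀⟩ := L3 (Metric.ball (0:ℝ) 1) measurableSet_ball
    (by rw [Real.volume_ball]; exact ENNReal.ofReal_ne_top) _ A₀ hA₀ne hA₀val
  have hpreball : ∀ z : ℝ, (fun x : ℝ => x + z) ⁻¹' Metric.ball (0:ℝ) 1 = Metric.ball (-z) 1 := by
    intro z; ext x
    simp [Metric.mem_ball, Real.dist_eq, sub_neg_eq_add]
  by_cases hn : n₀ = 0
  · -- case: the deterministic value is 0
    have hc0 : φ 0 (Metric.ball (0:ℝ) 1) = 0 := by rw [hn₀, hn]; simp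
    obtain ⟨N, hN⟩ := exists_nat_gt (M' * r / (s - r))
    have hsr : 0 < s - r := sub_pos.mpr hrs
    have hNpos : (0:ℝ) < N :=
      lt_of_le_of_lt (div_nonneg (mul_nonneg hM'0.le hr.le) hsr.le) hN
    have hkey : r * (2 * (M' + N)) < s * (2 * N) := by
      rw [div_lt_iff₀ hsr] at hN
      nlinarith
    set A : Set Ω := {ω | X ω (Metric.ball (0:ℝ) (M' + N)) = 0} with hAdef
    set B : Set Ω := {ω | φ (X ω) (Metric.ball (0:ℝ) (N:ℝ)) = 0} with hBdef
    have hAB : ∀ᵐ ω ∂(ℙ : Measure Ω), ω ∈ A → ω ∈ B := by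
      filter_upwards [hEq] with ω hω hA'
      have hz : ∀ z : ℝ, |z| ≤ (N:ℝ) → φ (X ω) (Metric.ball (-z) 1) = 0 := by
        intro z hzb
        have h := L2 N (Nat.cast_nonneg N) ω hω hA' z hzb (Metric.ball 0 1)
          measurableSet_ball subset_rfl
        rw [hpreball z] at h
        rw [h, hc0]
      have hcov : Metric.ball (0:ℝ) (N:ℝ)
          ⊆ ⋃ j : Fin (2*N+1), Metric.ball (-((N:ℝ) - (j:ℕ))) 1 := by
        intro x hx
        rw [Metric.mem_ball, Real.dist_eq, sub_zero, abs_lt] at hx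
        have hx0 : (0:ℝ) ≤ x + N := by linarith [hx.1]
        set i : ℤ := ⌊x + (N:ℝ)⌋ with hidef
        have hi0 : 0 ≤ i := Int.floor_nonneg.mpr hx0
        have hile : (i:ℝ) ≤ x + N := Int.floor_le _
        have hilt : x + N < i + 1 := Int.lt_floor_add_one _
        set j : ℕ := i.toNat with hjdef
        have hjcast : (j:ℝ) = (i:ℝ) := by
          rw [hjdef]; exact_mod_cast congrArg (fun n : ℤ => (n:ℝ)) (Int.toNat_of_nonneg hi0)
        have hjlt : j < 2*N+1 := by
          have h1 : (j:ℝ) < 2*N := by rw [hjcast]; linarith [hx.2]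
          have : (j:ℝ) < ((2*N+1 : ℕ) : ℝ) := by push_cast; linarith
          exact_mod_cast this
        refine Set.mem_iUnion.mpr ⟨⟨j, hjlt⟩, ?_⟩
        rw [Metric.mem_ball, Real.dist_eq]
        have he : x - (-((N:ℝ) - (j:ℕ))) = (x + N) - (j:ℕ) := by ring
        rw [he, abs_lt]
        constructor
        · rw [hjcast]; linarith
        · rw [hjcast]; linarith
      have hle := le_trans (measure_mono (μ := φ (X ω)) hcov) (measure_iUnion_le _)
      have hzero : ∀ j : Fin (2*N+1), φ (X ω) (Metric.ball (-((N:ℝ) - (j:ℕ))) 1) = 0 := by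
        intro j
        apply hz
        have hj2 : (j:ℕ) ≤ 2*N := Nat.lt_succ_iff.mp j.2
        have hj2' : ((j:ℕ):ℝ) ≤ 2*N := by exact_mod_cast hj2
        rw [abs_le]
        constructor
        · linarith
        · have : (0:ℝ) ≤ ((j:ℕ):ℝ) := Nat.cast_nonneg _
          linarith
      simp only [hzero, tsum_zero] at hle
      exact le_antisymm hle zero_le
    have hdiffnull : ℙ (A \ B) = 0 := by
      have h0 := ae_iff.mp hAB
      refine measure_mono_null ?_ h0
      intro ω hω
      simp only [Set.mem_setOf_eq, Classical.not_imp]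
      exact ⟨hω.1, hω.2⟩
    have h1 : ℙ A ≤ ℙ B := measure_mono_ae (ae_le_set.mpr hdiffnull)
    rw [hPX (M' + N) (by linarith), hPY N (Nat.cast_nonneg N),
      ENNReal.ofReal_le_ofReal_iff (Real.exp_pos _).le, Real.exp_le_exp] at h1
    linarith
  · -- case n₀ ≥ 1
    have hn₁ : 1 ≤ n₀ := Nat.one_le_iff_ne_zero.mpr hn
    set k : ℕ := n₀ + 1 with hkdef
    have hk1 : (1:ℝ) ≤ (k:ℝ) := by exact_mod_cast Nat.one_le_iff_ne_zero.mpr (by omega)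
    have hkpos : (0:ℝ) < (k:ℝ) := lt_of_lt_of_le one_pos hk1
    set t : ℝ := 1 / (k:ℝ) with htdef
    have ht0 : 0 < t := by positivity
    have ht1 : t ≤ 1 := by rw [htdef]; rw [div_le_one hkpos]; exact hk1
    have hkt : (k:ℝ) * t = 1 := by rw [htdef]; field_simp
    -- find ω₀ in A₂ satisfying equivariance
    set A₂ : Set Ω := {ω | X ω (Metric.ball (0:ℝ) (M' + 2)) = 0} with hA₂def
    have hA₂ne : ℙ A₂ ≠ 0 := by
      rw [hPX (M' + 2) (by linarith)]
      simp [Real.exp_pos]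
    obtain ⟨ω₀, hω₀A, hω₀G⟩ : ∃ ω, ω ∈ A₂ ∧ ∀ z : ℝ,
        φ (Measure.map (fun x => x + z) (X ω)) = Measure.map (fun x => x + z) (φ (X ω)) := by
      by_contra h
      push_neg at h
      refine hA₂ne (measure_mono_null ?_ (ae_iff.mp hEq))
      intro ω hω
      obtain ⟨z, hz⟩ := h ω hω
      exact fun hall => hz (hall z)
    have hω₀A2 : X ω₀ (Metric.ball (0:ℝ) (M' + 2)) = 0 := hω₀A
    have hω₀A0 : X ω₀ (Metric.ball (0:ℝ) M') = 0 := by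
      have hsub : Metric.ball (0:ℝ) M' ⊆ Metric.ball 0 (M'+2) :=
        Metric.ball_subset_ball (by linarith)
      have := measure_mono (μ := X ω₀) hsub
      rw [hω₀A2] at this
      exact le_antisymm this zero_le
    -- translation invariance of φ 0 on subintervals of B(0,1)
    have hIco : ∀ a b : ℝ, Set.Ico a b ⊆ Metric.ball (0:ℝ) 1 →
        Set.Ico 0 (b-a) ⊆ Metric.ball (0:ℝ) 1 → |a| ≤ 2 →
        φ 0 (Set.Ico a b) = φ 0 (Set.Ico 0 (b-a)) := by
      intro a b hab h0b ha
      have h1 : φ (X ω₀) (Set.Ico a b) = φ 0 (Set.Ico a b) :=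
        L1 ω₀ hω₀A0 _ measurableSet_Ico hab
      have h2 : φ (X ω₀) ((fun x => x + (-a)) ⁻¹' Set.Ico 0 (b-a)) = φ 0 (Set.Ico 0 (b-a)) :=
        L2 2 (by norm_num) ω₀ hω₀G hω₀A2 (-a) (by rwa [abs_neg]) _ measurableSet_Ico h0b
      rw [Set.preimage_add_const_Ico] at h2
      have e1 : (0:ℝ) - (-a) = a := by ring
      have e2 : (b - a) - (-a) = b := by ring
      rw [e1, e2] at h2
      rw [← h1, ← h2]
    -- the value on Ico 0 t is an integer m
    have htball : Set.Ico (0:ℝ) t ⊆ Metric.ball (0:ℝ) 1 := by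
      intro x hx
      rw [Metric.mem_ball, Real.dist_eq, sub_zero, abs_lt]
      exact ⟨by linarith [hx.1], by linarith [hx.1, hx.2]⟩
    have hu : ∀ ω ∈ A₀, φ (X ω) (Set.Ico (0:ℝ) t) = φ 0 (Set.Ico (0:ℝ) t) :=
      fun ω hω => L1 ω hω _ measurableSet_Ico htball
    obtain ⟨m, hm⟩ := L3 (Set.Ico (0:ℝ) t) measurableSet_Ico
      (by rw [Real.volume_Ico]; exact ENNReal.ofReal_ne_top) _ A₀ hA₀ne hu
    -- k pieces inside the ball, each with value φ 0 (Ico 0 t)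
    have hpieceball : ∀ j : ℕ, j < k →
        Set.Ico ((j:ℝ)*t) ((j:ℝ)*t + t) ⊆ Metric.ball (0:ℝ) 1 := by
      intro j hj x hx
      rw [Metric.mem_ball, Real.dist_eq, sub_zero, abs_lt]
      have hjt : (0:ℝ) ≤ (j:ℝ)*t := mul_nonneg (Nat.cast_nonneg _) ht0.le
      have hjk : (j:ℝ) + 1 ≤ (k:ℝ) := by exact_mod_cast hj
      have hup : (j:ℝ)*t + t ≤ 1 := by
        have : ((j:ℝ) + 1) * t ≤ (k:ℝ) * t :=
          mul_le_mul_of_nonneg_right hjk ht0.le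
        rw [hkt] at this
        linarith [this]
      exact ⟨by linarith [hx.1], by linarith [hx.2]⟩
    have hpiece : ∀ j : ℕ, j < k →
        φ 0 (Set.Ico ((j:ℝ)*t) ((j:ℝ)*t + t)) = φ 0 (Set.Ico (0:ℝ) t) := by
      intro j hj
      have hsubball : Set.Ico (0:ℝ) ((j:ℝ)*t + t - (j:ℝ)*t) ⊆ Metric.ball (0:ℝ) 1 := by
        rw [add_sub_cancel_left]; exact htball
      have habs : |(j:ℝ)*t| ≤ 2 := by
        rw [abs_of_nonneg (mul_nonneg (Nat.cast_nonneg _) ht0.le)]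
        have hjk : (j:ℝ) ≤ (k:ℝ) := by exact_mod_cast hj.le
        nlinarith
      have := hIco ((j:ℝ)*t) ((j:ℝ)*t + t) (hpieceball j hj) hsubball habs
      rwa [add_sub_cancel_left] at this
    -- summing the pieces
    have hdisj2 : (↑(Finset.range k) : Set ℕ).PairwiseDisjoint
        (fun j : ℕ => Set.Ico ((j:ℝ)*t) ((j:ℝ)*t + t)) := by
      intro i _ j _ hij
      rcases lt_or_gt_of_ne hij with h | h
      · refine Set.Ico_disjoint_Ico.mpr ?_
        have : ((i:ℝ)+1) * t ≤ (j:ℝ) * t := by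
          have : (i:ℝ) + 1 ≤ (j:ℝ) := by exact_mod_cast h
          nlinarith
        calc min ((i:ℝ)*t + t) ((j:ℝ)*t + t) ≤ (i:ℝ)*t + t := min_le_left _ _
          _ ≤ (j:ℝ)*t := by nlinarith
          _ ≤ max ((i:ℝ)*t) ((j:ℝ)*t) := le_max_right _ _
      · refine Set.Ico_disjoint_Ico.mpr ?_
        have : ((j:ℝ)+1) * t ≤ (i:ℝ) * t := by
          have : (j:ℝ) + 1 ≤ (i:ℝ) := by exact_mod_cast h
          nlinarith
        calc min ((i:ℝ)*t + t) ((j:ℝ)*t + t) ≤ (j:ℝ)*t + t := min_le_right _ _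
          _ ≤ (i:ℝ)*t := by nlinarith
          _ ≤ max ((i:ℝ)*t) ((j:ℝ)*t) := le_max_left _ _
    have hk_u : (k:ℝ≥0∞) * φ 0 (Set.Ico (0:ℝ) t) ≤ (n₀:ℝ≥0∞) := by
      have hBU : φ 0 (⋃ j ∈ Finset.range k, Set.Ico ((j:ℝ)*t) ((j:ℝ)*t + t))
          = ∑ j ∈ Finset.range k, φ 0 (Set.Ico ((j:ℝ)*t) ((j:ℝ)*t + t)) :=
        measure_biUnion_finset hdisj2 (fun j _ => measurableSet_Ico)
      calc (k:ℝ≥0∞) * φ 0 (Set.Ico (0:ℝ) t)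
          = ∑ _j ∈ Finset.range k, φ 0 (Set.Ico (0:ℝ) t) := by
            rw [Finset.sum_const, Finset.card_range, nsmul_eq_mul]
        _ = ∑ j ∈ Finset.range k, φ 0 (Set.Ico ((j:ℝ)*t) ((j:ℝ)*t + t)) :=
            Finset.sum_congr rfl (fun j hj => (hpiece j (Finset.mem_range.mp hj)).symm)
        _ = φ 0 (⋃ j ∈ Finset.range k, Set.Ico ((j:ℝ)*t) ((j:ℝ)*t + t)) := hBU.symm
        _ ≤ φ 0 (Metric.ball (0:ℝ) 1) := by
            refine measure_mono ?_
            intro x hx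
            simp only [Set.mem_iUnion] at hx
            obtain ⟨j, hj, hx⟩ := hx
            exact hpieceball j (Finset.mem_range.mp hj) hx
        _ = (n₀:ℝ≥0∞) := hn₀
    have hm0 : m = 0 := by
      by_contra hm0
      have h1 : (k:ℝ≥0∞) * (m:ℝ≥0∞) ≤ (n₀:ℝ≥0∞) := hm ▸ hk_u
      rw [← Nat.cast_mul, Nat.cast_le] at h1
      have h2 : k ≤ k * m := Nat.le_mul_of_pos_right k (Nat.pos_of_ne_zero hm0)
      omega
    have hu0 : φ 0 (Set.Ico (0:ℝ) t) = 0 := by rw [hm, hm0]; simp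
    -- every short Ico inside the ball has measure 0
    have hsmall : ∀ a b : ℝ, Set.Ico a b ⊆ Metric.ball (0:ℝ) 1 → b - a ≤ t →
        φ 0 (Set.Ico a b) = 0 := by
      intro a b hab hlen
      rcases le_or_gt b a with h | h
      · rw [Set.Ico_eq_empty (not_lt.mpr h)]
        exact measure_empty
      · have hamem := hab ⟨le_refl a, h⟩
        rw [Metric.mem_ball, Real.dist_eq, sub_zero, abs_lt] at hamem
        have ha2 : |a| ≤ 2 := by
          rw [abs_le]; exact ⟨by linarith [hamem.1], by linarith [hamem.2]⟩
        have h0b : Set.Ico (0:ℝ) (b-a) ⊆ Metric.ball (0:ℝ) 1 := by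
          intro x hx
          rw [Metric.mem_ball, Real.dist_eq, sub_zero, abs_lt]
          exact ⟨by linarith [hx.1], by linarith [hx.1, hx.2]⟩
        rw [hIco a b hab h0b ha2]
        have hmono : φ 0 (Set.Ico (0:ℝ) (b-a)) ≤ φ 0 (Set.Ico (0:ℝ) t) :=
          measure_mono (Set.Ico_subset_Ico_right hlen)
        rw [hu0] at hmono
        exact le_antisymm hmono zero_le
    -- left edge piece
    set δ : ℝ := t / 2 with hδdef
    have hδ0 : 0 < δ := by positivity
    have hδt : δ ≤ t := by linarith
    have hedge : φ 0 (Set.Ioo (-1:ℝ) (-1 + δ)) = 0 := by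
      have hcov : Set.Ioo (-1:ℝ) (-1+δ)
          ⊆ ⋃ m : ℕ, Set.Ico (-1 + δ/((m:ℝ)+1)) (-1 + δ) := by
        intro x hx
        obtain ⟨hx1, hx2⟩ := hx
        obtain ⟨m', hm'⟩ := exists_nat_gt (δ / (x + 1))
        refine Set.mem_iUnion.mpr ⟨m', ?_, by linarith⟩
        have hx1' : (0:ℝ) < x + 1 := by linarith
        have hlt : δ / (x+1) < (m':ℝ) + 1 := by linarith [hm']
        rw [div_lt_iff₀ hx1'] at hlt
        have hdle : δ / ((m':ℝ)+1) ≤ x + 1 := by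
          rw [div_le_iff₀ (by positivity : (0:ℝ) < (m':ℝ)+1)]
          nlinarith
        linarith
      refine le_antisymm (le_trans (measure_mono hcov) (le_trans (measure_iUnion_le _) ?_))
        zero_le
      have hzz : ∀ m' : ℕ, φ 0 (Set.Ico (-1 + δ/((m':ℝ)+1)) (-1 + δ)) = 0 := by
        intro m'
        apply hsmall
        · intro x hx
          rw [Metric.mem_ball, Real.dist_eq, sub_zero, abs_lt]
          have hd : (0:ℝ) < δ/((m':ℝ)+1) := by positivity
          constructor
          · linarith [hx.1]
          · have : x < -1 + δ := hx.2
            linarith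
        · have hd : (0:ℝ) ≤ δ/((m':ℝ)+1) := by positivity
          linarith
      exact le_of_eq (by rw [tsum_congr hzz]; exact tsum_zero)
    -- cover the ball
    have hfinal : φ 0 (Metric.ball (0:ℝ) 1) = 0 := by
      have hball : Metric.ball (0:ℝ) 1 = Set.Ioo (-1:ℝ) 1 := by
        rw [Real.ball_eq_Ioo]; norm_num
      have h2δ : (4*(k:ℝ)) * δ = 2 := by
        rw [hδdef, htdef]; field_simp; ring
      have hcov : Set.Ioo (-1:ℝ) 1 ⊆ Set.Ioo (-1:ℝ) (-1+δ)
          ∪ ⋃ j ∈ Finset.range (4*k-1), Set.Ico (-1 + ((j:ℝ)+1)*δ) (-1 + ((j:ℝ)+2)*δ) := by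
        intro x hx
        obtain ⟨hx1, hx2⟩ := hx
        rcases lt_or_ge x (-1 + δ) with h | h
        · exact Or.inl ⟨hx1, h⟩
        · right
          have hq1 : (1:ℝ) ≤ (x+1)/δ := by
            rw [le_div_iff₀ hδ0]; linarith
          set i : ℤ := ⌊(x + 1)/δ⌋ with hidef
          have hi1 : 1 ≤ i := by
            rw [hidef]; exact Int.le_floor.mpr (by exact_mod_cast hq1)
          have hile : (i:ℝ) ≤ (x+1)/δ := Int.floor_le _
          have hilt : (x+1)/δ < i + 1 := Int.lt_floor_add_one _
          set j : ℕ := (i - 1).toNat with hjdef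
          have hjcast : (j:ℝ) = (i:ℝ) - 1 := by
            have : ((i-1).toNat : ℤ) = i - 1 := Int.toNat_of_nonneg (by omega)
            rw [hjdef]
            exact_mod_cast congrArg (fun n : ℤ => (n:ℝ)) this
          have hiup : (i:ℝ) < 4*(k:ℝ) := by
            have hq2 : (x+1)/δ < 4*(k:ℝ) := by
              rw [div_lt_iff₀ hδ0]
              nlinarith
            linarith
          have hjlt : j < 4*k-1 := by
            have hi4 : i < 4*(k:ℤ) := by exact_mod_cast hiup
            omega
          refine Set.mem_biUnion (Finset.mem_range.mpr hjlt) ?_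
          simp only [Set.mem_Ico]
          have hile' : ((j:ℝ)+1)*δ ≤ x + 1 := by
            rw [hjcast]
            have h5 : ((i:ℝ)) * δ ≤ x + 1 := by
              have := (le_div_iff₀ hδ0).mp hile
              linarith
            linarith
          have hilt' : x + 1 < ((j:ℝ)+2)*δ := by
            rw [hjcast]
            have h6 : x + 1 < ((i:ℝ)+1) * δ := by
              have := (div_lt_iff₀ hδ0).mp hilt
              linarith
            linarith
          constructor <;> linarith
      rw [hball]
      refine le_antisymm (le_trans (measure_mono hcov)
        (le_trans (measure_union_le _ _) ?_)) zero_le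
      rw [hedge, zero_add]
      refine le_trans (measure_biUnion_finset_le _ _) ?_
      have hz : ∀ j ∈ Finset.range (4*k-1),
          φ 0 (Set.Ico (-1 + ((j:ℝ)+1)*δ) (-1 + ((j:ℝ)+2)*δ)) = 0 := by
        intro j hj
        have hjn : j + 2 ≤ 4*k := by have := Finset.mem_range.mp hj; omega
        have hjk : (j:ℝ) + 2 ≤ 4*(k:ℝ) := by exact_mod_cast hjn
        apply hsmall
        · intro x hx
          rw [Metric.mem_ball, Real.dist_eq, sub_zero, abs_lt]
          have h1 : (0:ℝ) < ((j:ℝ)+1)*δ := by positivity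
          have h2 : ((j:ℝ)+2)*δ ≤ 2 := by nlinarith
          exact ⟨by linarith [hx.1], by linarith [hx.2]⟩
        · have : (-1 + ((j:ℝ)+2)*δ) - (-1 + ((j:ℝ)+1)*δ) = δ := by ring
          rw [this]; exact hδt
      rw [Finset.sum_congr rfl hz, Finset.sum_const, smul_zero]
    rw [hfinal] at hn₀
    exact hn (by exact_mod_cast hn₀.symm)
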